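/- Let p be a prime with p ≡ 1 (mod 6) and let n₀₁, n₀₂, n₁₂ be the transition numbers of the cubic residue cosets. Then n₀₁·n₀₂ + n₀₁·n₁₂ + n₀₂·n₁₂ = n₀₁² + n₀₂² + n₁₂² - n₁₂. -/

import Mathlib

/-- `Gcoset p g k` is the coset `G_k = {g^j : j ≡ k (mod 3)}` of the subgroup `G₀` of
cubic residues in `(ℤ/pℤ)*`, where `g` is a fixed generator of `(ℤ/pℤ)*`. -/
def Gcoset (p : ℕ) (g : ZMod p) (k : ZMod 3) : Set (ZMod p) :=
  {x | ∃ j : ℕ, (j : ZMod 3) = k ∧ x = g ^ j}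

/-- `transNum p g d i k` is the transition number `n_{ik}(d)`: the number of
`b ∈ {1,…,p-1}`, `b ≠ p-d`, with `b ∈ G_i` and `b+d ∈ G_k`. -/
noncomputable def transNum (p : ℕ) (g : ZMod p) (d : ℕ) (i k : ZMod 3) : ℕ :=
  Nat.card {b : ℕ // 1 ≤ b ∧ b ≤ p - 1 ∧ b ≠ p - d ∧
    (b : ZMod p) ∈ Gcoset p g i ∧ (b : ZMod p) + (d : ZMod p) ∈ Gcoset p g k}

namespace Stmt5

structure Setup (p : ℕ) (g : ZMod p) : Prop where
  hp : p.Prime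
  hp6 : p % 6 = 1
  hg : ∀ x : ZMod p, x ≠ 0 → ∃ j : ℕ, x = g ^ j

variable {p : ℕ} {g : ZMod p} [Fact p.Prime]

lemma Setup.p7 (S : Setup p g) : 7 ≤ p := by
  have h1 := S.hp.two_le
  have h6 := S.hp6
  by_contra h
  push_neg at h
  interval_cases p <;> omega

lemma Setup.gne (S : Setup p g) : g ≠ 0 := by
  intro h
  have h7 := S.p7
  have h2 : (2 : ZMod p) ≠ 0 := by
    have : ((2 : ℕ) : ZMod p) ≠ 0 := by
      rw [Ne, ZMod.natCast_eq_zero_iff]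
      intro hd
      have := Nat.le_of_dvd two_pos hd
      omega
    simpa using this
  obtain ⟨j, hj⟩ := S.hg 2 h2
  rw [h] at hj
  rcases j with _ | j
  · rw [pow_zero] at hj
    have : ((2 : ℕ) : ZMod p) = ((1 : ℕ) : ZMod p) := by push_cast; exact hj
    rw [ZMod.natCast_eq_natCast_iff] at this
    simp only [Nat.ModEq] at this
    rw [Nat.mod_eq_of_lt (by omega : 2 < p), Nat.mod_eq_of_lt (by omega : 1 < p)] at this
    omega
  · rw [zero_pow (Nat.succ_ne_zero j)] at hj
    exact h2 hj

lemma Setup.orderOf_gu (S : Setup p g) : orderOf (Units.mk0 g S.gne) = p - 1 := by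
  have h : ∀ x : (ZMod p)ˣ, x ∈ Subgroup.zpowers (Units.mk0 g S.gne) := by
    intro x
    obtain ⟨j, hj⟩ := S.hg x x.ne_zero
    refine ⟨(j : ℤ), ?_⟩
    show Units.mk0 g S.gne ^ (j : ℤ) = x
    rw [zpow_natCast]
    exact Units.ext (by simpa using hj.symm)
  rw [orderOf_eq_card_of_forall_mem_zpowers h, Nat.card_units, Nat.card_zmod]

lemma Setup.pow_inj (S : Setup p g) {a b : ℕ} (h : g ^ a = g ^ b) :
    a ≡ b [MOD p - 1] := by
  have h' : (Units.mk0 g S.gne) ^ a = (Units.mk0 g S.gne) ^ b :=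
    Units.ext (by simpa using h)
  rw [pow_eq_pow_iff_modEq, S.orderOf_gu] at h'
  exact h'

lemma Setup.gpow_card (S : Setup p g) : g ^ (p - 1) = 1 := by
  have := pow_orderOf_eq_one (Units.mk0 g S.gne)
  rw [S.orderOf_gu] at this
  have := congrArg Units.val this
  simpa using this

lemma Setup.zero_not_mem (S : Setup p g) (i : ZMod 3) : (0 : ZMod p) ∉ Gcoset p g i := by
  rintro ⟨j, -, hj⟩
  exact pow_ne_zero j S.gne hj.symm

lemma Setup.mem_ne_zero (S : Setup p g) {x : ZMod p} {i : ZMod 3}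
    (hx : x ∈ Gcoset p g i) : x ≠ 0 := fun h => S.zero_not_mem i (h ▸ hx)

lemma Setup.mul_mem (S : Setup p g) {x y : ZMod p} {i k : ZMod 3}
    (hx : x ∈ Gcoset p g i) (hy : y ∈ Gcoset p g k) : x * y ∈ Gcoset p g (i + k) := by
  obtain ⟨a, ha, hxa⟩ := hx
  obtain ⟨b, hb, hyb⟩ := hy
  exact ⟨a + b, by push_cast; rw [ha, hb], by rw [hxa, hyb, pow_add]⟩

lemma Setup.mem_unique (S : Setup p g) {x : ZMod p} {i k : ZMod 3}
    (hx : x ∈ Gcoset p g i) (hk : x ∈ Gcoset p g k) : i = k := by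
  obtain ⟨a, ha, hxa⟩ := hx
  obtain ⟨b, hb, hxb⟩ := hk
  have h3 : (3 : ℕ) ∣ p - 1 := by have := S.p7; have := S.hp6; omega
  have hab : a ≡ b [MOD 3] := (S.pow_inj (hxa.symm.trans hxb)).of_dvd h3
  rw [← ha, ← hb]
  exact (ZMod.natCast_eq_natCast_iff a b 3).mpr hab

lemma Setup.exists_mem (S : Setup p g) {x : ZMod p} (hx : x ≠ 0) :
    ∃ i, x ∈ Gcoset p g i := by
  obtain ⟨j, hj⟩ := S.hg x hx
  exact ⟨(j : ZMod 3), j, rfl, hj⟩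

lemma Setup.one_mem (S : Setup p g) : (1 : ZMod p) ∈ Gcoset p g 0 :=
  ⟨0, by simp, by simp⟩

lemma Setup.g_mem (S : Setup p g) : g ∈ Gcoset p g 1 :=
  ⟨1, by simp, by simp⟩

lemma Setup.neg_one_mem (S : Setup p g) : (-1 : ZMod p) ∈ Gcoset p g 0 := by
  have h7 := S.p7
  have h6 := S.hp6
  set q := (p - 1) / 2 with hq
  have hgq : g ^ q = -1 := by
    have hsq : g ^ q * g ^ q = 1 := by
      rw [← pow_add, show q + q = p - 1 by omega]
      exact S.gpow_card
    have hne1 : g ^ q ≠ 1 := by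
      intro h1
      have hu : (Units.mk0 g S.gne) ^ q = 1 := Units.ext (by simpa using h1)
      have hdvd := orderOf_dvd_of_pow_eq_one hu
      rw [S.orderOf_gu] at hdvd
      have := Nat.le_of_dvd (by omega) hdvd
      omega
    rcases mul_self_eq_one_iff.mp hsq with h | h
    · exact absurd h hne1
    · exact h
  refine ⟨q, ?_, hgq.symm⟩
  have h3q : (3 : ℕ) ∣ q := by omega
  rw [ZMod.natCast_eq_zero_iff]
  exact h3q

lemma Setup.inv_mem (S : Setup p g) {x : ZMod p} {i : ZMod 3}
    (hx : x ∈ Gcoset p g i) : x⁻¹ ∈ Gcoset p g (-i) := by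
  have h7 := S.p7
  have h6 := S.hp6
  obtain ⟨a, ha, rfl⟩ := hx
  refine ⟨a * (p - 2), ?_, ?_⟩
  · have h2 : ((p - 2 : ℕ) : ZMod 3) = 2 := by
      have hmod : (p - 2) ≡ 2 [MOD 3] := by
        simp only [Nat.ModEq]
        omega
      calc ((p - 2 : ℕ) : ZMod 3) = ((2 : ℕ) : ZMod 3) :=
            (ZMod.natCast_eq_natCast_iff _ _ _).mpr hmod
        _ = 2 := by norm_num
    rw [Nat.cast_mul, ha, h2]
    have : ∀ j : ZMod 3, j * 2 = -j := by decide
    exact this i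
  · apply inv_eq_of_mul_eq_one_right
    rw [← pow_add, show a + a * (p - 2) = a * (p - 2 + 1) by ring,
      show p - 2 + 1 = p - 1 by omega, mul_comm, pow_mul, S.gpow_card, one_pow]

lemma Setup.neg_mem (S : Setup p g) {x : ZMod p} {i : ZMod 3}
    (hx : x ∈ Gcoset p g i) : -x ∈ Gcoset p g i := by
  have := S.mul_mem S.neg_one_mem hx
  simpa using this

open Finset

open scoped Classical in
noncomputable def chi (p : ℕ) (g : ZMod p) (i : ZMod 3) (x : ZMod p) : ℕ :=
  if x ∈ Gcoset p g i then 1 else 0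

lemma Setup.chi_zero (S : Setup p g) (i : ZMod 3) : chi p g i 0 = 0 := by
  simp only [chi]
  rw [if_neg (S.zero_not_mem i)]

lemma Setup.chi_neg (S : Setup p g) (i : ZMod 3) (x : ZMod p) :
    chi p g i (-x) = chi p g i x := by
  have h : -x ∈ Gcoset p g i ↔ x ∈ Gcoset p g i :=
    ⟨fun h => by simpa using S.neg_mem h, S.neg_mem⟩
  simp only [chi]
  by_cases hx : x ∈ Gcoset p g i
  · rw [if_pos (h.mpr hx), if_pos hx]
  · rw [if_neg (fun hc => hx (h.mp hc)), if_neg hx]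

lemma Setup.chi_mul (S : Setup p g) {s : ZMod p} {k : ZMod 3}
    (hs : s ∈ Gcoset p g k) (i : ZMod 3) (u : ZMod p) :
    chi p g i (s * u) = chi p g (i - k) u := by
  have hs0 : s ≠ 0 := S.mem_ne_zero hs
  simp only [chi]
  by_cases h : u ∈ Gcoset p g (i - k)
  · rw [if_pos h, if_pos]
    have := S.mul_mem hs h
    rwa [show k + (i - k) = i by ring] at this
  · rw [if_neg h, if_neg]
    intro hsu
    have h2 := S.mul_mem (S.inv_mem hs) hsu
    rw [inv_mul_cancel_left₀ hs0] at h2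
    rw [show -k + i = i - k by ring] at h2
    exact h h2

lemma Setup.chi_sum (S : Setup p g) (x : ZMod p) :
    chi p g 0 x + chi p g 1 x + chi p g 2 x = if x = 0 then 0 else 1 := by
  by_cases hx : x = 0
  · subst hx
    simp [S.chi_zero]
  · rw [if_neg hx]
    obtain ⟨i, hi⟩ := S.exists_mem hx
    have tri : ∀ j : ZMod 3, j = 0 ∨ j = 1 ∨ j = 2 := by decide
    have hone : ∀ j : ZMod 3, i = j → chi p g j x = 1 := by
      rintro j rfl; simp only [chi]; rw [if_pos hi]
    have hzero : ∀ j : ZMod 3, i ≠ j → chi p g j x = 0 := by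
      intro j hj; simp only [chi]
      rw [if_neg (fun hc => hj (S.mem_unique hi hc))]
    rcases tri i with h | h | h <;> subst h
    · rw [hone 0 rfl, hzero 1 (by decide), hzero 2 (by decide)]
    · rw [hone 1 rfl, hzero 0 (by decide), hzero 2 (by decide)]
    · rw [hone 2 rfl, hzero 0 (by decide), hzero 1 (by decide)]

variable [NeZero p]

open scoped Classical in
noncomputable def Cf (p : ℕ) (g : ZMod p) [NeZero p] (i : ZMod 3) : Finset (ZMod p) :=
  Finset.univ.filter (· ∈ Gcoset p g i)

lemma mem_Cf {i : ZMod 3} {x : ZMod p} : x ∈ Cf p g i ↔ x ∈ Gcoset p g i := by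
  classical
  simp [Cf]

lemma Setup.card_Cf (S : Setup p g) (i : ZMod 3) : (Cf p g i).card = (Cf p g 0).card := by
  have step : ∀ j : ZMod 3, (Cf p g j).card = (Cf p g (j + 1)).card := by
    intro j
    have himg : Finset.image (fun x => g * x) (Cf p g j) = Cf p g (j + 1) := by
      ext y
      simp only [Finset.mem_image, mem_Cf]
      constructor
      · rintro ⟨x, hx, rfl⟩
        have := S.mul_mem S.g_mem hx
        rwa [show (1 : ZMod 3) + j = j + 1 by ring] at this
      · intro hy
        refine ⟨g⁻¹ * y, ?_, by rw [mul_inv_cancel_left₀ S.gne]⟩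
        have := S.mul_mem (S.inv_mem S.g_mem) hy
        rwa [show -(1 : ZMod 3) + (j + 1) = j by ring] at this
    rw [← himg, Finset.card_image_of_injective _ (mul_right_injective₀ S.gne)]
  have tri : ∀ j : ZMod 3, j = 0 ∨ j = 1 ∨ j = 2 := by decide
  rcases tri i with h | h | h <;> subst h
  · rfl
  · rw [show (1 : ZMod 3) = 0 + 1 by decide, ← step 0]
  · rw [show (2 : ZMod 3) = 0 + 1 + 1 by decide, ← step (0+1), ← step 0]

lemma Setup.card_Cf_pos (S : Setup p g) : 0 < (Cf p g 0).card :=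
  Finset.card_pos.mpr ⟨1, mem_Cf.mpr S.one_mem⟩

lemma Setup.sum_chi (S : Setup p g) (i : ZMod 3) :
    ∑ x : ZMod p, chi p g i x = (Cf p g 0).card := by
  classical
  rw [← S.card_Cf i, Cf, Finset.card_filter]
  refine Finset.sum_congr rfl fun x _ => ?_
  by_cases h : x ∈ Gcoset p g i <;> simp [chi, h]

noncomputable def N (p : ℕ) (g : ZMod p) [NeZero p] (i k : ZMod 3) : ℕ :=
  ∑ x : ZMod p, chi p g i x * chi p g k (x + 1)

lemma Setup.N_sym (S : Setup p g) (i k : ZMod 3) : N p g i k = N p g k i := by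
  unfold N
  rw [← Equiv.sum_comp ((Equiv.addRight (1 : ZMod p)).trans (Equiv.neg (ZMod p)))
      (fun x => chi p g i x * chi p g k (x + 1))]
  refine Finset.sum_congr rfl fun x _ => ?_
  simp only [Equiv.trans_apply, Equiv.coe_addRight, Equiv.neg_apply]
  rw [show -(x + 1) + 1 = -x by ring, S.chi_neg, S.chi_neg, mul_comm]

lemma Setup.N_inv (S : Setup p g) (i k : ZMod 3) : N p g i k = N p g (-i) (k - i) := by
  unfold N
  rw [← Equiv.sum_comp (Equiv.inv (ZMod p))
      (fun x => chi p g i x * chi p g k (x + 1))]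
  refine Finset.sum_congr rfl fun x _ => ?_
  simp only [Equiv.inv_apply]
  by_cases hx0 : x = 0
  · subst hx0
    rw [inv_zero, S.chi_zero, S.chi_zero, zero_mul, zero_mul]
  by_cases hx : x ∈ Gcoset p g (-i)
  · have hxi : x⁻¹ ∈ Gcoset p g i := by simpa using S.inv_mem hx
    have h1 : chi p g i x⁻¹ = 1 := by simp only [chi]; rw [if_pos hxi]
    have h2 : chi p g (-i) x = 1 := by simp only [chi]; rw [if_pos hx]
    rw [h1, h2, one_mul, one_mul,
      show x⁻¹ + 1 = x⁻¹ * (x + 1) by field_simp; ring, S.chi_mul hxi]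
  · have h1 : chi p g i x⁻¹ = 0 := by
      simp only [chi]
      rw [if_neg]
      intro hc
      have := S.inv_mem hc
      rw [inv_inv] at this
      exact hx this
    have h2 : chi p g (-i) x = 0 := by simp only [chi]; rw [if_neg hx]
    rw [h1, h2, zero_mul, zero_mul]

lemma Setup.N_row (S : Setup p g) (i : ZMod 3) :
    N p g i 0 + N p g i 1 + N p g i 2 + chi p g i (-1) = (Cf p g 0).card := by
  classical
  have key : ∑ x : ZMod p,
      (chi p g i x * chi p g 0 (x + 1) + chi p g i x * chi p g 1 (x + 1)
        + chi p g i x * chi p g 2 (x + 1) + if x = -1 then chi p g i x else 0)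
      = ∑ x : ZMod p, chi p g i x := by
    refine Finset.sum_congr rfl fun x _ => ?_
    rw [← mul_add, ← mul_add, S.chi_sum (x + 1)]
    by_cases hx : x = -1
    · subst hx
      rw [if_pos rfl, if_pos (by ring), mul_zero, zero_add]
    · rw [if_neg hx, if_neg (fun hc => hx (by linear_combination hc)), mul_one, add_zero]
  simp only [Finset.sum_add_distrib, Finset.sum_ite_eq' Finset.univ (-1 : ZMod p),
    Finset.mem_univ, if_true] at key
  rw [← S.sum_chi i, ← key]
  rfl

lemma Setup.fiber (S : Setup p g) {s : ZMod p} {k : ZMod 3} (hs : s ∈ Gcoset p g k)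
    (i j : ZMod 3) :
    ∑ x : ZMod p, chi p g i x * chi p g j (s - x) = N p g (j - k) (i - k) := by
  have hs0 : s ≠ 0 := S.mem_ne_zero hs
  rw [← Equiv.sum_comp ((Equiv.addRight (1 : ZMod p)).trans (Equiv.mulLeft₀ s hs0))
      (fun x => chi p g i x * chi p g j (s - x))]
  refine Finset.sum_congr rfl fun t _ => ?_
  simp only [Equiv.trans_apply, Equiv.coe_addRight, Equiv.mulLeft₀_apply]
  rw [S.chi_mul hs, show s - s * (t + 1) = s * (-t) by ring, S.chi_mul hs,
    S.chi_neg, mul_comm]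

lemma expand (i j i' j' : ZMod 3) :
    (∑ s : ZMod p, (∑ x : ZMod p, chi p g i x * chi p g j (s - x)) *
      (∑ z : ZMod p, chi p g i' z * chi p g j' (-s - z)))
    = ∑ x : ZMod p, ∑ y : ZMod p, ∑ z : ZMod p,
        chi p g i x * chi p g j y * (chi p g i' z * chi p g j' (-(x + y + z))) := by
  have step1 : (∑ s : ZMod p, (∑ x : ZMod p, chi p g i x * chi p g j (s - x)) *
      (∑ z : ZMod p, chi p g i' z * chi p g j' (-s - z)))
      = ∑ s : ZMod p, ∑ x : ZMod p, ∑ z : ZMod p,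
          chi p g i x * chi p g j (s - x) * (chi p g i' z * chi p g j' (-s - z)) := by
    refine Finset.sum_congr rfl fun s _ => ?_
    rw [Finset.sum_mul]
    exact Finset.sum_congr rfl fun x _ => Finset.mul_sum _ _ _
  rw [step1, Finset.sum_comm]
  refine Finset.sum_congr rfl fun x _ => ?_
  rw [← Equiv.sum_comp (Equiv.addLeft x)
      (fun s => ∑ z : ZMod p, chi p g i x * chi p g j (s - x) *
        (chi p g i' z * chi p g j' (-s - z)))]
  refine Finset.sum_congr rfl fun y _ => ?_
  refine Finset.sum_congr rfl fun z _ => ?_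
  simp only [Equiv.coe_addLeft]
  rw [show x + y - x = y by ring, show -(x + y) - z = -(x + y + z) by ring]

lemma Setup.sum_split (S : Setup p g) (F : ZMod p → ℕ) :
    ∑ s : ZMod p, F s
      = F 0 + ∑ s ∈ Cf p g 0, F s + ∑ s ∈ Cf p g 1, F s + ∑ s ∈ Cf p g 2, F s := by
  classical
  have hd01 : Disjoint (Cf p g 0) (Cf p g 1) := by
    rw [Finset.disjoint_left]
    intro a h0 h1
    exact absurd (S.mem_unique (mem_Cf.mp h0) (mem_Cf.mp h1)) (by decide)
  have hd2 : Disjoint (Cf p g 0 ∪ Cf p g 1) (Cf p g 2) := by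
    rw [Finset.disjoint_left]
    intro a ha h2
    rcases Finset.mem_union.mp ha with h | h
    · exact absurd (S.mem_unique (mem_Cf.mp h) (mem_Cf.mp h2)) (by decide)
    · exact absurd (S.mem_unique (mem_Cf.mp h) (mem_Cf.mp h2)) (by decide)
  have h0 : (0 : ZMod p) ∉ (Cf p g 0 ∪ Cf p g 1) ∪ Cf p g 2 := by
    intro hc
    rcases Finset.mem_union.mp hc with h | h
    · rcases Finset.mem_union.mp h with h' | h'
      · exact S.zero_not_mem 0 (mem_Cf.mp h')
      · exact S.zero_not_mem 1 (mem_Cf.mp h')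
    · exact S.zero_not_mem 2 (mem_Cf.mp h)
  have huniv : (Finset.univ : Finset (ZMod p))
      = insert 0 ((Cf p g 0 ∪ Cf p g 1) ∪ Cf p g 2) := by
    ext x
    simp only [Finset.mem_univ, Finset.mem_insert, Finset.mem_union, mem_Cf, true_iff]
    by_cases hx : x = 0
    · exact Or.inl hx
    · refine Or.inr ?_
      obtain ⟨i, hi⟩ := S.exists_mem hx
      have tri : ∀ j : ZMod 3, j = 0 ∨ j = 1 ∨ j = 2 := by decide
      rcases tri i with h | h | h <;> subst h
      · exact Or.inl (Or.inl hi)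
      · exact Or.inl (Or.inr hi)
      · exact Or.inr hi
  rw [huniv, Finset.sum_insert h0, Finset.sum_union hd2, Finset.sum_union hd01]
  ring

lemma Setup.sum_coset_const (S : Setup p g) (k i j i' j' : ZMod 3) :
    ∑ s ∈ Cf p g k, ((∑ x : ZMod p, chi p g i x * chi p g j (s - x)) *
      (∑ z : ZMod p, chi p g i' z * chi p g j' (-s - z)))
    = (Cf p g 0).card * (N p g (j - k) (i - k) * N p g (j' - k) (i' - k)) := by
  have hconst : ∀ s ∈ Cf p g k,
      ((∑ x : ZMod p, chi p g i x * chi p g j (s - x)) *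
        (∑ z : ZMod p, chi p g i' z * chi p g j' (-s - z)))
      = N p g (j - k) (i - k) * N p g (j' - k) (i' - k) := by
    intro s hs
    have hs' : s ∈ Gcoset p g k := mem_Cf.mp hs
    have hns : -s ∈ Gcoset p g k := S.neg_mem hs'
    rw [S.fiber hs' i j, S.fiber hns i' j']
  rw [Finset.sum_congr rfl hconst, Finset.sum_const, smul_eq_mul, S.card_Cf k]

lemma Setup.quad (S : Setup p g) :
    N p g 0 0 * N p g 2 1 + N p g 2 2 * N p g 1 0 + N p g 1 1 * N p g 0 2
    = N p g 1 0 * N p g 2 0 + N p g 0 2 * N p g 1 2 + N p g 2 1 * N p g 0 1 := by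
  classical
  have chi_disj : ∀ (a b : ZMod 3) (z : ZMod p), a ≠ b → chi p g a z * chi p g b z = 0 := by
    intro a b z hab
    by_cases hz : z ∈ Gcoset p g a
    · have : chi p g b z = 0 := by
        simp only [chi]; rw [if_neg (fun hc => hab (S.mem_unique hz hc))]
      rw [this, mul_zero]
    · have : chi p g a z = 0 := by simp only [chi]; rw [if_neg hz]
      rw [this, zero_mul]
  have hE : (∑ s : ZMod p, (∑ x : ZMod p, chi p g 0 x * chi p g 0 (s - x)) *
        (∑ z : ZMod p, chi p g 1 z * chi p g 2 (-s - z)))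
      = (∑ s : ZMod p, (∑ x : ZMod p, chi p g 0 x * chi p g 1 (s - x)) *
        (∑ z : ZMod p, chi p g 0 z * chi p g 2 (-s - z))) := by
    rw [expand, expand]
    refine Finset.sum_congr rfl fun x _ => ?_
    rw [Finset.sum_comm]
    refine Finset.sum_congr rfl fun y _ => Finset.sum_congr rfl fun z _ => ?_
    rw [show x + z + y = x + y + z by ring]
    ring
  have e1 : (0 - 1 : ZMod 3) = 2 := by decide
  have e2 : (2 - 1 : ZMod 3) = 1 := by decide
  have e3 : (1 - 1 : ZMod 3) = 0 := by decide
  have e4 : (0 - 2 : ZMod 3) = 1 := by decide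
  have e5 : (2 - 2 : ZMod 3) = 0 := by decide
  have e6 : (1 - 2 : ZMod 3) = 2 := by decide
  have hL : (∑ s : ZMod p, (∑ x : ZMod p, chi p g 0 x * chi p g 0 (s - x)) *
        (∑ z : ZMod p, chi p g 1 z * chi p g 2 (-s - z)))
      = (Cf p g 0).card * (N p g 0 0 * N p g 2 1 + N p g 2 2 * N p g 1 0
          + N p g 1 1 * N p g 0 2) := by
    rw [S.sum_split (fun s => (∑ x : ZMod p, chi p g 0 x * chi p g 0 (s - x)) *
        (∑ z : ZMod p, chi p g 1 z * chi p g 2 (-s - z)))]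
    have h0 : (∑ z : ZMod p, chi p g 1 z * chi p g 2 (-(0:ZMod p) - z)) = 0 := by
      refine Finset.sum_eq_zero fun z _ => ?_
      rw [show -(0:ZMod p) - z = -z by ring, S.chi_neg]
      exact chi_disj 1 2 z (by decide)
    rw [h0, mul_zero, zero_add,
      S.sum_coset_const 0 0 0 1 2, S.sum_coset_const 1 0 0 1 2, S.sum_coset_const 2 0 0 1 2]
    simp only [sub_zero, e1, e2, e3, e4, e5, e6]
    ring
  have hR : (∑ s : ZMod p, (∑ x : ZMod p, chi p g 0 x * chi p g 1 (s - x)) *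
        (∑ z : ZMod p, chi p g 0 z * chi p g 2 (-s - z)))
      = (Cf p g 0).card * (N p g 1 0 * N p g 2 0 + N p g 0 2 * N p g 1 2
          + N p g 2 1 * N p g 0 1) := by
    rw [S.sum_split (fun s => (∑ x : ZMod p, chi p g 0 x * chi p g 1 (s - x)) *
        (∑ z : ZMod p, chi p g 0 z * chi p g 2 (-s - z)))]
    have h0 : (∑ x : ZMod p, chi p g 0 x * chi p g 1 ((0:ZMod p) - x)) = 0 := by
      refine Finset.sum_eq_zero fun x _ => ?_
      rw [show (0:ZMod p) - x = -x by ring, S.chi_neg]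
      exact chi_disj 0 1 x (by decide)
    rw [h0, zero_mul, zero_add,
      S.sum_coset_const 0 0 1 0 2, S.sum_coset_const 1 0 1 0 2, S.sum_coset_const 2 0 1 0 2]
    simp only [sub_zero, e1, e2, e3, e4, e5, e6]
    ring
  rw [hL, hR] at hE
  exact Nat.eq_of_mul_eq_mul_left S.card_Cf_pos hE

lemma Setup.transNum_eq (S : Setup p g) (i k : ZMod 3) :
    _root_.transNum p g 1 i k = N p g i k := by
  classical
  have h7 := S.p7
  have e : {b : ℕ // 1 ≤ b ∧ b ≤ p - 1 ∧ b ≠ p - 1 ∧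
        ((b : ℕ) : ZMod p) ∈ Gcoset p g i ∧
        ((b : ℕ) : ZMod p) + ((1 : ℕ) : ZMod p) ∈ Gcoset p g k} ≃
      {x : ZMod p // x ∈ Gcoset p g i ∧ x + 1 ∈ Gcoset p g k} :=
    { toFun := fun b => ⟨(b.1 : ZMod p), b.2.2.2.2.1, by
        simpa using b.2.2.2.2.2⟩
      invFun := fun x => ⟨x.1.val, by
        have hx := x.2.1
        have hx1 := x.2.2
        have hne : x.1 ≠ 0 := S.mem_ne_zero hx
        have hvlt : x.1.val < p := ZMod.val_lt x.1
        have hv0 : x.1.val ≠ 0 := fun h => hne ((ZMod.val_eq_zero x.1).mp h)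
        have hvne : x.1.val ≠ p - 1 := by
          intro h
          have hxm : x.1 = -1 := by
            have hrv : ((x.1.val : ℕ) : ZMod p) = x.1 := ZMod.natCast_rightInverse x.1
            rw [h] at hrv
            rw [← hrv, Nat.cast_sub (by omega : 1 ≤ p), Nat.cast_one,
              ZMod.natCast_self, zero_sub]
          have hz : x.1 + 1 = 0 := by rw [hxm]; ring
          rw [hz] at hx1
          exact absurd hx1 (S.zero_not_mem k)
        refine ⟨by omega, by omega, hvne, ?_, ?_⟩
        · rwa [ZMod.natCast_rightInverse x.1]
        · rw [ZMod.natCast_rightInverse x.1, Nat.cast_one]; exact hx1⟩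
      left_inv := fun b => Subtype.ext (by
        have hv : ((b.1 : ℕ) : ZMod p).val = b.1 % p := ZMod.val_natCast p b.1
        have hb1 := b.2.2.1
        have hb2 := b.2.1
        simp only [hv]
        exact Nat.mod_eq_of_lt (by omega))
      right_inv := fun x => Subtype.ext (ZMod.natCast_rightInverse x.1) }
  have hNc : N p g i k = Nat.card {x : ZMod p // x ∈ Gcoset p g i ∧ x + 1 ∈ Gcoset p g k} := by
    rw [Nat.card_eq_fintype_card, Fintype.card_subtype]
    unfold N
    rw [Finset.card_filter]
    refine Finset.sum_congr rfl fun x _ => ?_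
    by_cases h1 : x ∈ Gcoset p g i <;> by_cases h2 : x + 1 ∈ Gcoset p g k <;>
      simp [chi, h1, h2]
  unfold _root_.transNum
  rw [Nat.card_congr e]
  exact hNc.symm

end Stmt5

theorem stmt_5 (p : ℕ) (hp : p.Prime) (hp6 : p % 6 = 1)
    (g : ZMod p) (hg : ∀ x : ZMod p, x ≠ 0 → ∃ j : ℕ, x = g ^ j)
    (n01 n02 n12 : ℤ) (h01 : n01 = transNum p g 1 0 1)
    (h02 : n02 = transNum p g 1 0 2) (h12 : n12 = transNum p g 1 1 2) :
    n01 * n02 + n01 * n12 + n02 * n12 = n01 ^ 2 + n02 ^ 2 + n12 ^ 2 - n12 := by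
  haveI : Fact p.Prime := ⟨hp⟩
  haveI : NeZero p := ⟨hp.ne_zero⟩
  have S : Stmt5.Setup p g := ⟨hp, hp6, hg⟩
  classical
  have h10 : Stmt5.N p g 1 0 = Stmt5.N p g 0 1 := S.N_sym 1 0
  have h20 : Stmt5.N p g 2 0 = Stmt5.N p g 0 2 := S.N_sym 2 0
  have h21 : Stmt5.N p g 2 1 = Stmt5.N p g 1 2 := S.N_sym 2 1
  have h22 : Stmt5.N p g 2 2 = Stmt5.N p g 0 1 := by
    have h := S.N_inv 2 2
    rw [show -(2 : ZMod 3) = 1 by decide, show (2 : ZMod 3) - 2 = 0 by decide] at h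
    rw [h, h10]
  have h11 : Stmt5.N p g 1 1 = Stmt5.N p g 0 2 := by
    have h := S.N_inv 1 1
    rw [show -(1 : ZMod 3) = 2 by decide, show (1 : ZMod 3) - 1 = 0 by decide] at h
    rw [h, h20]
  have hr0 := S.N_row 0
  have hr1 := S.N_row 1
  have hchi0 : Stmt5.chi p g 0 (-1) = 1 := by
    simp only [Stmt5.chi]; rw [if_pos S.neg_one_mem]
  have hchi1 : Stmt5.chi p g 1 (-1) = 0 := by
    simp only [Stmt5.chi]
    rw [if_neg (fun hc => absurd (S.mem_unique S.neg_one_mem hc) (by decide))]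
  rw [hchi0] at hr0
  rw [hchi1, add_zero, h10, h11] at hr1
  have hDC : Stmt5.N p g 0 0 + 1 = Stmt5.N p g 1 2 := by omega
  have hq := S.quad
  rw [h21, h22, h10, h11, h20] at hq
  have hqz : (Stmt5.N p g 0 0 : ℤ) * Stmt5.N p g 1 2
        + Stmt5.N p g 0 1 * Stmt5.N p g 0 1 + Stmt5.N p g 0 2 * Stmt5.N p g 0 2
      = Stmt5.N p g 0 1 * Stmt5.N p g 0 2 + Stmt5.N p g 0 2 * Stmt5.N p g 1 2
        + Stmt5.N p g 1 2 * Stmt5.N p g 0 1 := by exact_mod_cast hq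
  have hDCz : (Stmt5.N p g 0 0 : ℤ) + 1 = Stmt5.N p g 1 2 := by exact_mod_cast hDC
  rw [h01, h02, h12, S.transNum_eq 0 1, S.transNum_eq 0 2, S.transNum_eq 1 2]
  linear_combination (-1 : ℤ) * hqz + (Stmt5.N p g 1 2 : ℤ) * hDCz
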